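/- Let A ∈ ℝ^{M×M} and k ≤ M, and suppose: (i) ‖A‖_op ≤ 3, and (ii) for all subsets S, T ⊆ [M] with |S| = M − k and |T| = k, the submatrix A_{S,T} satisfies σ_min(A_{S,T}) ≥ 1/8 — equivalently, for every k-sparse unit vector y, dist_k(Ay) ≥ 1/8 where dist_k(v) = inf over k-sparse w of ‖v − w‖₂. Then for every x ∈ ℝ^M with ‖x‖₂ = 1, dist_k of the stacked vector (x, Ax) ∈ ℝ^{2M} is at least 1/33. -/

import Mathlib

open Matrix
open scoped Classical

/-- Distance to the set of k-sparse vectors in the Euclidean norm. -/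
noncomputable def distk {ι : Type*} [Fintype ι] (k : ℕ) (v : ι → ℝ) : ℝ :=
  sInf ((fun w => Real.sqrt (∑ i, (v i - w i)^2)) ''
    {w : ι → ℝ | (Finset.univ.filter (fun i => w i ≠ 0)).card ≤ k})

/-- The ℓ²→ℓ² operator norm of a real matrix. -/
noncomputable def opNorm {m n : Type*} [Fintype m] [Fintype n] [DecidableEq n]
    (B : Matrix m n ℝ) : ℝ :=
  ‖LinearMap.toContinuousLinearMap (Matrix.toEuclideanLin B)‖

noncomputable def enorm2 {ι : Type*} [Fintype ι] (v : ι → ℝ) : ℝ :=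
  Real.sqrt (∑ i, (v i)^2)

lemma enorm_eq {ι : Type*} [Fintype ι] (v : ι → ℝ) :
    enorm2 v = ‖(WithLp.equiv 2 (ι → ℝ)).symm v‖ := by
  rw [EuclideanSpace.norm_eq]
  simp [enorm2, Real.norm_eq_abs, sq_abs]

lemma enorm_nonneg {ι : Type*} [Fintype ι] (v : ι → ℝ) : 0 ≤ enorm2 v :=
  Real.sqrt_nonneg _

lemma enorm_triangle {ι : Type*} [Fintype ι] (u v : ι → ℝ) :
    enorm2 (u + v) ≤ enorm2 u + enorm2 v := by
  simp only [enorm_eq]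
  rw [show (WithLp.equiv 2 (ι → ℝ)).symm (u + v)
      = (WithLp.equiv 2 (ι → ℝ)).symm u + (WithLp.equiv 2 (ι → ℝ)).symm v from rfl]
  exact norm_add_le _ _

lemma enorm2_smul {ι : Type*} [Fintype ι] (c : ℝ) (v : ι → ℝ) :
    enorm2 (c • v) = |c| * enorm2 v := by
  simp only [enorm_eq]
  rw [show (WithLp.equiv 2 (ι → ℝ)).symm (c • v)
      = c • (WithLp.equiv 2 (ι → ℝ)).symm v from rfl]
  rw [norm_smul, Real.norm_eq_abs]

lemma distk_eq {ι : Type*} [Fintype ι] (k : ℕ) (v : ι → ℝ) :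
    distk k v = sInf ((fun w => enorm2 (v - w)) ''
      {w : ι → ℝ | (Finset.univ.filter (fun i => w i ≠ 0)).card ≤ k}) := rfl

lemma sparse_nonempty {ι : Type*} [Fintype ι] (k : ℕ) (v : ι → ℝ) :
    ((fun w => enorm2 (v - w)) ''
      {w : ι → ℝ | (Finset.univ.filter (fun i => w i ≠ 0)).card ≤ k}).Nonempty := by
  refine ⟨enorm2 (v - 0), ⟨0, ?_, rfl⟩⟩
  simp

lemma sparse_bdd {ι : Type*} [Fintype ι] (k : ℕ) (v : ι → ℝ) :
    BddBelow ((fun w => enorm2 (v - w)) ''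
      {w : ι → ℝ | (Finset.univ.filter (fun i => w i ≠ 0)).card ≤ k}) := by
  refine ⟨0, fun a ha => ?_⟩
  obtain ⟨w, -, rfl⟩ := ha
  exact enorm_nonneg _

lemma distk_le {ι : Type*} [Fintype ι] {k : ℕ} (v w : ι → ℝ)
    (hw : (Finset.univ.filter (fun i => w i ≠ 0)).card ≤ k) :
    distk k v ≤ enorm2 (v - w) := by
  rw [distk_eq]
  exact csInf_le (sparse_bdd k v) ⟨w, hw, rfl⟩

lemma le_distk {ι : Type*} [Fintype ι] {k : ℕ} {v : ι → ℝ} {c : ℝ}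
    (h : ∀ w : ι → ℝ, (Finset.univ.filter (fun i => w i ≠ 0)).card ≤ k →
      c ≤ enorm2 (v - w)) :
    c ≤ distk k v := by
  rw [distk_eq]
  refine le_csInf (sparse_nonempty k _) ?_
  rintro b ⟨w, hw, rfl⟩
  exact h w hw

lemma distk_lt {ι : Type*} [Fintype ι] {k : ℕ} {v : ι → ℝ} {c : ℝ}
    (h : distk k v < c) :
    ∃ w : ι → ℝ, (Finset.univ.filter (fun i => w i ≠ 0)).card ≤ k ∧
      enorm2 (v - w) < c := by
  rw [distk_eq] at h
  obtain ⟨b, ⟨w, hw, rfl⟩, hb⟩ := exists_lt_of_csInf_lt (sparse_nonempty k _) h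
  exact ⟨w, hw, hb⟩

lemma distk_nonneg {ι : Type*} [Fintype ι] (k : ℕ) (v : ι → ℝ) :
    0 ≤ distk k v :=
  le_distk fun w _ => enorm_nonneg _

lemma distk_lipschitz {ι : Type*} [Fintype ι] (k : ℕ) (u v : ι → ℝ) :
    distk k u ≤ distk k v + enorm2 (u - v) := by
  rw [← sub_le_iff_le_add]
  refine le_distk fun w hw => ?_
  rw [sub_le_iff_le_add]
  calc distk k u ≤ enorm2 (u - w) := distk_le u w hw
    _ = enorm2 ((u - v) + (v - w)) := by ring_nf
    _ ≤ enorm2 (u - v) + enorm2 (v - w) := enorm_triangle _ _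
    _ = enorm2 (v - w) + enorm2 (u - v) := by ring

lemma distk_smul_ge {ι : Type*} [Fintype ι] (k : ℕ) (v : ι → ℝ) {c : ℝ} (hc : 0 < c) :
    c * distk k v ≤ distk k (c • v) := by
  refine le_distk fun w hw => ?_
  have hsupp : (Finset.univ.filter (fun i => (c⁻¹ • w) i ≠ 0)).card ≤ k := by
    refine le_trans (Finset.card_le_card ?_) hw
    intro i hi
    simp only [Finset.mem_filter, Pi.smul_apply, smul_eq_mul, ne_eq] at hi ⊢
    refine ⟨hi.1, fun h => hi.2 ?_⟩
    simp [h]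
  have key : enorm2 (c • v - w) = c * enorm2 (v - c⁻¹ • w) := by
    rw [show c • v - w = c • (v - c⁻¹ • w) by
      rw [smul_sub, smul_smul, mul_inv_cancel₀ hc.ne', one_smul]]
    rw [enorm2_smul, abs_of_pos hc]
  rw [key]
  exact mul_le_mul_of_nonneg_left (distk_le v _ hsupp) hc.le

lemma enorm_le_stack_left {M : ℕ} (x z : Fin M → ℝ) (w : (Fin M ⊕ Fin M) → ℝ) :
    enorm2 (x - fun i => w (Sum.inl i)) ≤ enorm2 (Sum.elim x z - w) := by
  unfold enorm2
  apply Real.sqrt_le_sqrt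
  rw [Fintype.sum_sum_type]
  have h2 : 0 ≤ ∑ i : Fin M, ((Sum.elim x z - w) (Sum.inr i))^2 :=
    Finset.sum_nonneg fun i _ => sq_nonneg _
  have h1 : ∑ i : Fin M, ((x - fun i => w (Sum.inl i)) i)^2
      = ∑ i : Fin M, ((Sum.elim x z - w) (Sum.inl i))^2 := by
    apply Finset.sum_congr rfl
    intro i _
    simp
  linarith

lemma enorm_le_stack_right {M : ℕ} (x z : Fin M → ℝ) (w : (Fin M ⊕ Fin M) → ℝ) :
    enorm2 (z - fun i => w (Sum.inr i)) ≤ enorm2 (Sum.elim x z - w) := by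
  unfold enorm2
  apply Real.sqrt_le_sqrt
  rw [Fintype.sum_sum_type]
  have h2 : 0 ≤ ∑ i : Fin M, ((Sum.elim x z - w) (Sum.inl i))^2 :=
    Finset.sum_nonneg fun i _ => sq_nonneg _
  have h1 : ∑ i : Fin M, ((z - fun i => w (Sum.inr i)) i)^2
      = ∑ i : Fin M, ((Sum.elim x z - w) (Sum.inr i))^2 := by
    apply Finset.sum_congr rfl
    intro i _
    simp
  linarith

lemma sparse_comp_inr {M k : ℕ} (w : (Fin M ⊕ Fin M) → ℝ)
    (hw : (Finset.univ.filter (fun i => w i ≠ 0)).card ≤ k) :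
    (Finset.univ.filter (fun i : Fin M => w (Sum.inr i) ≠ 0)).card ≤ k := by
  refine le_trans ?_ hw
  apply Finset.card_le_card_of_injOn (fun i => Sum.inr i)
  · intro i hi
    simp only [Finset.mem_coe, Finset.mem_filter, Finset.mem_univ, true_and] at hi ⊢
    exact hi
  · intro a _ b _ h
    exact Sum.inr.inj h

theorem stmt_18 {M : ℕ} (A : Matrix (Fin M) (Fin M) ℝ) (k : ℕ) (hk : k ≤ M)
    (hop : opNorm A ≤ 3)
    (hsub : ∀ y : Fin M → ℝ,
      (Finset.univ.filter (fun i => y i ≠ 0)).card ≤ k →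
      ∑ i, (y i)^2 = 1 → (1/8 : ℝ) ≤ distk k (A.mulVec y)) :
    ∀ x : Fin M → ℝ, ∑ i, (x i)^2 = 1 →
      (1/33 : ℝ) ≤ distk k (Sum.elim x (A.mulVec x)) := by
  intro x hx
  have henx : enorm2 x = 1 := by rw [enorm2, hx, Real.sqrt_one]
  have hAbound : ∀ u : Fin M → ℝ, enorm2 (A.mulVec u) ≤ 3 * enorm2 u := by
    intro u
    have := (LinearMap.toContinuousLinearMap (Matrix.toEuclideanLin A)).le_opNorm
      ((WithLp.equiv 2 (Fin M → ℝ)).symm u)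
    have heq : (LinearMap.toContinuousLinearMap (Matrix.toEuclideanLin A))
        ((WithLp.equiv 2 (Fin M → ℝ)).symm u)
        = (WithLp.equiv 2 (Fin M → ℝ)).symm (A.mulVec u) := by
      simp [LinearMap.toContinuousLinearMap]
    rw [heq] at this
    rw [enorm_eq, enorm_eq]
    calc ‖(WithLp.equiv 2 (Fin M → ℝ)).symm (A.mulVec u)‖
        ≤ opNorm A * ‖(WithLp.equiv 2 (Fin M → ℝ)).symm u‖ := this
      _ ≤ 3 * ‖(WithLp.equiv 2 (Fin M → ℝ)).symm u‖ :=
        mul_le_mul_of_nonneg_right hop (norm_nonneg _)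
  by_cases hcase : (1/33 : ℝ) ≤ distk k x
  · refine le_trans hcase (le_distk fun w hw => ?_)
    calc distk k x ≤ enorm2 (x - fun i => w (Sum.inl i)) := by
          refine distk_le x _ ?_
          refine le_trans ?_ hw
          apply Finset.card_le_card_of_injOn (fun i => Sum.inl i)
          · intro i hi
            simp only [Finset.mem_coe, Finset.mem_filter, Finset.mem_univ, true_and] at hi ⊢
            exact hi
          · intro a _ b _ h
            exact Sum.inl.inj h
      _ ≤ enorm2 (Sum.elim x (A.mulVec x) - w) := enorm_le_stack_left _ _ _
  · push_neg at hcase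
    obtain ⟨y, hy_sparse, hy⟩ := distk_lt hcase
    have hny : (32/33 : ℝ) ≤ enorm2 y := by
      have h1 : enorm2 x ≤ enorm2 y + enorm2 (x - y) := by
        calc enorm2 x = enorm2 (y + (x - y)) := by ring_nf
          _ ≤ enorm2 y + enorm2 (x - y) := enorm_triangle _ _
      rw [henx] at h1
      linarith
    have hnypos : (0 : ℝ) < enorm2 y := by linarith
    set c := enorm2 y with hc
    set y' := c⁻¹ • y with hy'
    have hy'_sparse : (Finset.univ.filter (fun i => y' i ≠ 0)).card ≤ k := by
      refine le_trans (Finset.card_le_card ?_) hy_sparse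
      intro i hi
      simp only [Finset.mem_filter, hy', Pi.smul_apply, smul_eq_mul, ne_eq] at hi ⊢
      refine ⟨hi.1, fun h => hi.2 ?_⟩
      simp [h]
    have hy'_unit : ∑ i, (y' i)^2 = 1 := by
      have : enorm2 y' = 1 := by
        rw [hy', enorm2_smul, abs_of_pos (inv_pos.mpr hnypos), inv_mul_cancel₀ hnypos.ne']
      have hs : Real.sqrt (∑ i, (y' i)^2) = 1 := this
      have h2 : Real.sqrt (∑ i, (y' i)^2) ^ 2 = ∑ i, (y' i)^2 :=
        Real.sq_sqrt (Finset.sum_nonneg (fun i _ => sq_nonneg (y' i)))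
      rw [hs] at h2
      simpa using h2.symm
    have h8 := hsub y' hy'_sparse hy'_unit
    have hAy : (4/33 : ℝ) ≤ distk k (A.mulVec y) := by
      have hscale : c * distk k (A.mulVec y') ≤ distk k (c • A.mulVec y') :=
        distk_smul_ge k _ hnypos
      have hcy : c • A.mulVec y' = A.mulVec y := by
        rw [hy', ← A.mulVec_smul, smul_smul, mul_inv_cancel₀ hnypos.ne', one_smul]
      rw [hcy] at hscale
      calc (4/33 : ℝ) = (32/33) * (1/8) := by norm_num
        _ ≤ c * distk k (A.mulVec y') := by
          apply mul_le_mul hny h8 (by norm_num)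
          linarith
        _ ≤ distk k (A.mulVec y) := hscale
    have hlip : distk k (A.mulVec y) ≤ distk k (A.mulVec x) + enorm2 (A.mulVec y - A.mulVec x) :=
      distk_lipschitz k _ _
    have hAdiff : enorm2 (A.mulVec y - A.mulVec x) ≤ 3/33 := by
      rw [← A.mulVec_sub]
      calc enorm2 (A.mulVec (y - x)) ≤ 3 * enorm2 (y - x) := hAbound _
        _ = 3 * enorm2 (x - y) := by rw [show y - x = -(x - y) by ring, show enorm2 (-(x-y)) = enorm2 (x - y) from by
              unfold enorm2; congr 1; apply Finset.sum_congr rfl; intro i _; simp only [Pi.neg_apply, Pi.sub_apply]; ring]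
        _ ≤ 3/33 := by linarith
    have hAx : (1/33 : ℝ) ≤ distk k (A.mulVec x) := by linarith
    refine le_trans hAx (le_distk fun w hw => ?_)
    calc distk k (A.mulVec x) ≤ enorm2 (A.mulVec x - fun i => w (Sum.inr i)) :=
          distk_le _ _ (sparse_comp_inr w hw)
      _ ≤ enorm2 (Sum.elim x (A.mulVec x) - w) := enorm_le_stack_right _ _ _
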